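/- Assume N ≥ 4. For a uniformly random labeling L and any 1 ≤ s₁ ≠ s₂ ≤ K, the variance of the cross-count satisfies Var(a_{s₁s₂}) = N_{s₁}N_{s₂}(N_{s₁}−1)(N_{s₂}−1)/((N−1)(N−3)) + (N_{s₁}N_{s₂}/(N−1))·(1 − N_{s₁}N_{s₂}/(N−1)). -/

import Mathlib

open Finset Filter MeasureTheory ProbabilityTheory Topology

namespace Crossmatch

/-- First endpoint (index `2j`, i.e., the paper's `2j-1` in 1-based indexing) of the `j`-th
matched pair in the fixed perfect matching on `{1, …, 2I}`. -/
def ep1 {I : ℕ} (j : Fin I) : Fin (2 * I) := ⟨2 * j.val, by have := j.isLt; omega⟩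

/-- Second endpoint (index `2j+1`, i.e., the paper's `2j`) of the `j`-th matched pair. -/
def ep2 {I : ℕ} (j : Fin I) : Fin (2 * I) := ⟨2 * j.val + 1, by have := j.isLt; omega⟩

/-- The set of labelings `L : {1,…,2I} → {1,…,K}` assigning label `s` to exactly `Nc s`
indices, for every `s`. -/
def labelings (I K : ℕ) (Nc : Fin K → ℕ) : Finset (Fin (2 * I) → Fin K) :=
  univ.filter fun L => ∀ s : Fin K, (univ.filter fun i => L i = s).card = Nc s

/-- The count `a_{st}(L)`: the number of matched pairs `j` with `{L(2j-1), L(2j)} = {s,t}`.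
For `s ≠ t` this is the cross-count; for `s = t` it is the pure count (both endpoints labeled
`s`). -/
def crossCount (I K : ℕ) (L : Fin (2 * I) → Fin K) (s t : Fin K) : ℕ :=
  (univ.filter fun j : Fin I =>
    ({L (ep1 j), L (ep2 j)} : Finset (Fin K)) = ({s, t} : Finset (Fin K))).card

/-- Expectation of a real-valued statistic under a uniformly random labeling. -/
noncomputable def expct (I K : ℕ) (Nc : Fin K → ℕ)
    (X : (Fin (2 * I) → Fin K) → ℝ) : ℝ :=
  (∑ L ∈ labelings I K Nc, X L) / ((labelings I K Nc).card : ℝ)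

open Classical in
/-- Probability of an event under a uniformly random labeling. -/
noncomputable def pr (I K : ℕ) (Nc : Fin K → ℕ)
    (ev : (Fin (2 * I) → Fin K) → Prop) : ℝ :=
  (((labelings I K Nc).filter ev).card : ℝ) / ((labelings I K Nc).card : ℝ)

/-- Variance of a real-valued statistic under a uniformly random labeling. -/
noncomputable def variance (I K : ℕ) (Nc : Fin K → ℕ)
    (X : (Fin (2 * I) → Fin K) → ℝ) : ℝ :=
  expct I K Nc (fun L => (X L - expct I K Nc X) ^ 2)

/-- Covariance of two real-valued statistics under a uniformly random labeling. -/
noncomputable def covar (I K : ℕ) (Nc : Fin K → ℕ)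
    (X Y : (Fin (2 * I) → Fin K) → ℝ) : ℝ :=
  expct I K Nc (fun L => (X L - expct I K Nc X) * (Y L - expct I K Nc Y))

/-- The index set of (unordered) pairs `s < t`, indexing the cross-count vector. -/
abbrev Pairs (K : ℕ) := {q : Fin K × Fin K // q.1 < q.2}

/-- The covariance matrix of the cross-count vector `(a_{st})_{s<t}` under a uniformly
random labeling. -/
noncomputable def covMatrix (I K : ℕ) (Nc : Fin K → ℕ) :
    Matrix (Pairs K) (Pairs K) ℝ :=
  Matrix.of fun q r =>
    covar I K Nc (fun L => (crossCount I K L q.1.1 q.1.2 : ℝ))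
      (fun L => (crossCount I K L r.1.1 r.1.2 : ℝ))

/-! ### Auxiliary lemmas -/

lemma pair_eq_pair' {α : Type*} [DecidableEq α] {x y s t : α} (hst : s ≠ t) :
    ({x, y} : Finset α) = {s, t} ↔ (x = s ∧ y = t) ∨ (x = t ∧ y = s) := by
  constructor
  · intro h
    have hx : x ∈ ({s, t} : Finset α) := h ▸ (Finset.mem_insert_self x {y})
    have hy : y ∈ ({s, t} : Finset α) :=
      h ▸ (Finset.mem_insert_of_mem (Finset.mem_singleton_self y))
    have hss : s ∈ ({x, y} : Finset α) := h ▸ (Finset.mem_insert_self s {t})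
    have ht : t ∈ ({x, y} : Finset α) :=
      h ▸ (Finset.mem_insert_of_mem (Finset.mem_singleton_self t))
    simp only [Finset.mem_insert, Finset.mem_singleton] at hx hy hss ht
    rcases hx with h1 | h1 <;> rcases hy with h2 | h2 <;> tauto
  · rintro (⟨rfl, rfl⟩ | ⟨rfl, rfl⟩)
    · rfl
    · exact Finset.pair_comm x y

lemma exists_perm' {α : Type*} [Fintype α] [DecidableEq α] {m : ℕ}
    (f g : Fin m → α) (hf : Function.Injective f) (hg : Function.Injective g) :
    ∃ σ : Equiv.Perm α, ∀ k, σ (f k) = g k := by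
  classical
  let e : {x // x ∈ Set.range f} ≃ {x // x ∈ Set.range g} :=
    (Equiv.ofInjective f hf).symm.trans (Equiv.ofInjective g hg)
  refine ⟨e.extendSubtype, fun k => ?_⟩
  have h1 : f k ∈ Set.range f := ⟨k, rfl⟩
  rw [Equiv.extendSubtype_apply_of_mem _ _ h1]
  show (Equiv.ofInjective g hg) ((Equiv.ofInjective f hf).symm ⟨f k, h1⟩) = g k
  have : (Equiv.ofInjective f hf).symm ⟨f k, h1⟩ = k := by
    simp [Equiv.ofInjective_symm_apply]
  rw [this]; simp [Equiv.ofInjective]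

variable {I K : ℕ} {Nc : Fin K → ℕ}

lemma mem_labelings {L : Fin (2*I) → Fin K} :
    L ∈ labelings I K Nc ↔ ∀ s, (univ.filter fun i => L i = s).card = Nc s := by
  simp [labelings]

lemma comp_mem (σ : Equiv.Perm (Fin (2*I))) {L : Fin (2*I) → Fin K}
    (hL : L ∈ labelings I K Nc) : (L ∘ σ) ∈ labelings I K Nc := by
  rw [mem_labelings] at hL ⊢
  intro s
  rw [← hL s]
  apply Finset.card_bij (fun i _ => σ i)
  · intro a ha; simp at ha ⊢; exact ha
  · intro a _ b _ h; exact σ.injective h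
  · intro b hb; simp at hb ⊢; exact ⟨σ.symm b, by simpa using hb⟩

lemma labelings_nonempty (I K : ℕ) (Nc : Fin K → ℕ)
    (hNsum : ∑ s, Nc s = 2 * I) : (labelings I K Nc).Nonempty := by
  have hcard : Fintype.card (Σ s : Fin K, Fin (Nc s)) = Fintype.card (Fin (2*I)) := by
    simp [Fintype.card_sigma, hNsum]
  classical
  let e : (Σ s : Fin K, Fin (Nc s)) ≃ Fin (2*I) := Fintype.equivOfCardEq hcard
  refine ⟨fun i => (e.symm i).1, ?_⟩
  simp only [labelings, mem_filter, mem_univ, true_and]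
  intro s
  have h1 : (univ.filter fun i => (e.symm i).1 = s).card
      = (univ.filter fun p : (Σ s : Fin K, Fin (Nc s)) => p.1 = s).card := by
    apply Finset.card_bij (fun i _ => e.symm i)
    · intro a ha; simp at ha ⊢; exact ha
    · intro a _ b _ h; exact e.symm.injective h
    · intro p hp; exact ⟨e p, by simp at hp ⊢; exact hp⟩
  rw [h1]
  have h2 : (univ.filter fun p : (Σ s : Fin K, Fin (Nc s)) => p.1 = s).card
      = Fintype.card {p : (Σ s : Fin K, Fin (Nc s)) // p.1 = s} := by
    rw [Fintype.card_subtype]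
  rw [h2]
  have e2 : {p : (Σ s : Fin K, Fin (Nc s)) // p.1 = s} ≃ Fin (Nc s) :=
    { toFun := fun p => Fin.cast (congrArg Nc p.2) p.1.2
      invFun := fun x => ⟨⟨s, x⟩, rfl⟩
      left_inv := by rintro ⟨⟨t, x⟩, rfl⟩; rfl
      right_inv := fun x => rfl }
  rw [Fintype.card_congr e2, Fintype.card_fin]

lemma transport {m : ℕ} (v v' : Fin m → Fin (2*I)) (hv : Function.Injective v)
    (hv' : Function.Injective v') (w : Fin m → Fin K) :
    ((labelings I K Nc).filter (fun L => ∀ k, L (v k) = w k)).card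
      = ((labelings I K Nc).filter (fun L => ∀ k, L (v' k) = w k)).card := by
  obtain ⟨σ, hσ⟩ := exists_perm' v' v hv' hv
  apply Finset.card_bij' (fun L _ => L ∘ σ) (fun L _ => L ∘ σ.symm)
  · intro L hL
    simp only [mem_filter] at hL ⊢
    refine ⟨comp_mem σ hL.1, fun k => ?_⟩
    show L (σ (v' k)) = w k
    rw [hσ k]; exact hL.2 k
  · intro L hL
    simp only [mem_filter] at hL ⊢
    refine ⟨comp_mem σ.symm hL.1, fun k => ?_⟩
    have := hL.2 k
    show L (σ.symm (v k)) = w k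
    rw [← hσ k, Equiv.symm_apply_apply]
    exact this
  · intro L _; funext i; simp
  · intro L _; funext i; simp

lemma inj2 {α : Type*} {p1 p2 : α} (h : p1 ≠ p2) : Function.Injective ![p1, p2] := by
  intro x y hxy
  fin_cases x <;> fin_cases y <;> simp_all

lemma transport2 (p1 p2 q1 q2 : Fin (2*I)) (h : p1 ≠ p2) (h' : q1 ≠ q2) (a b : Fin K) :
    ((labelings I K Nc).filter (fun L => L p1 = a ∧ L p2 = b)).card
      = ((labelings I K Nc).filter (fun L => L q1 = a ∧ L q2 = b)).card := by
  have := transport (Nc := Nc) ![p1,p2] ![q1,q2] (inj2 h) (inj2 h') ![a,b]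
  simpa [Fin.forall_fin_two] using this

lemma inj4 {α : Type*} {p1 p2 p3 p4 : α} (h12 : p1 ≠ p2) (h13 : p1 ≠ p3) (h14 : p1 ≠ p4)
    (h23 : p2 ≠ p3) (h24 : p2 ≠ p4) (h34 : p3 ≠ p4) :
    Function.Injective ![p1, p2, p3, p4] := by
  intro x y hxy
  fin_cases x <;> fin_cases y <;> simp_all

lemma transport4 (p1 p2 p3 p4 q1 q2 q3 q4 : Fin (2*I))
    (h12 : p1 ≠ p2) (h13 : p1 ≠ p3) (h14 : p1 ≠ p4)
    (h23 : p2 ≠ p3) (h24 : p2 ≠ p4) (h34 : p3 ≠ p4)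
    (g12 : q1 ≠ q2) (g13 : q1 ≠ q3) (g14 : q1 ≠ q4)
    (g23 : q2 ≠ q3) (g24 : q2 ≠ q4) (g34 : q3 ≠ q4) (a b : Fin K) :
    ((labelings I K Nc).filter (fun L => L p1 = a ∧ L p2 = a ∧ L p3 = b ∧ L p4 = b)).card
      = ((labelings I K Nc).filter (fun L => L q1 = a ∧ L q2 = a ∧ L q3 = b ∧ L q4 = b)).card := by
  have := transport (Nc := Nc) ![p1,p2,p3,p4] ![q1,q2,q3,q4]
    (inj4 h12 h13 h14 h23 h24 h34) (inj4 g12 g13 g14 g23 g24 g34) ![a,a,b,b]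
  simpa [Fin.forall_fin_succ, Fin.forall_fin_two] using this

lemma pair_count (a b : Fin K) (hab : a ≠ b) (p1 p2 : Fin (2*I)) (hp : p1 ≠ p2) :
    (2*I) * (2*I - 1) * ((labelings I K Nc).filter (fun L => L p1 = a ∧ L p2 = b)).card
      = (labelings I K Nc).card * (Nc a * Nc b) := by
  classical
  have key : ∑ x ∈ (univ : Finset (Fin (2*I) × Fin (2*I))).filter (fun x => x.1 ≠ x.2),
      ((labelings I K Nc).filter (fun L => L x.1 = a ∧ L x.2 = b)).card
      = (labelings I K Nc).card * (Nc a * Nc b) := by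
    have swap : ∀ x : Fin (2*I) × Fin (2*I),
        ((labelings I K Nc).filter (fun L => L x.1 = a ∧ L x.2 = b)).card
        = ∑ L ∈ labelings I K Nc, if (L x.1 = a ∧ L x.2 = b) then 1 else 0 := by
      intro x; rw [Finset.card_filter]
    simp_rw [swap]
    rw [Finset.sum_comm]
    have inner : ∀ L ∈ labelings I K Nc,
        (∑ x ∈ (univ : Finset (Fin (2*I) × Fin (2*I))).filter (fun x => x.1 ≠ x.2),
          if (L x.1 = a ∧ L x.2 = b) then 1 else 0) = Nc a * Nc b := by
      intro L hL
      rw [← Finset.sum_filter, Finset.sum_const, smul_eq_mul, mul_one]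
      have hset : (univ.filter (fun x : Fin (2*I) × Fin (2*I) => x.1 ≠ x.2)).filter
          (fun x => L x.1 = a ∧ L x.2 = b)
          = (univ.filter (fun i => L i = a)) ×ˢ (univ.filter (fun i => L i = b)) := by
        ext ⟨x1, x2⟩
        simp only [mem_filter, mem_univ, true_and, mem_product]
        constructor
        · rintro ⟨-, h1, h2⟩; exact ⟨h1, h2⟩
        · rintro ⟨h1, h2⟩
          refine ⟨?_, h1, h2⟩
          rintro rfl; rw [h1] at h2; exact hab h2
      rw [hset, Finset.card_product]
      simp only [labelings, mem_filter] at hL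
      rw [hL.2 a, hL.2 b]
    rw [Finset.sum_congr rfl inner, Finset.sum_const, smul_eq_mul]
  have const : ∀ x ∈ (univ : Finset (Fin (2*I) × Fin (2*I))).filter (fun x => x.1 ≠ x.2),
      ((labelings I K Nc).filter (fun L => L x.1 = a ∧ L x.2 = b)).card
      = ((labelings I K Nc).filter (fun L => L p1 = a ∧ L p2 = b)).card := by
    intro x hx
    simp only [mem_filter, mem_univ, true_and] at hx
    exact transport2 x.1 x.2 p1 p2 hx hp a b
  rw [Finset.sum_congr rfl const, Finset.sum_const, smul_eq_mul] at key
  have hcard : ((univ : Finset (Fin (2*I) × Fin (2*I))).filter (fun x => x.1 ≠ x.2)).card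
      = (2*I) * (2*I - 1) := by
    have h1 : (univ : Finset (Fin (2*I) × Fin (2*I))).filter (fun x => x.1 ≠ x.2)
        = (univ : Finset (Fin (2*I))).offDiag := by
      ext x; simp [Finset.mem_offDiag]
    rw [h1, Finset.offDiag_card, Nat.mul_sub_one]
    simp
  rw [hcard] at key
  rw [← key]

lemma quad_count (a b : Fin K) (hab : a ≠ b) (p1 p2 p3 p4 : Fin (2*I))
    (h12 : p1 ≠ p2) (h13 : p1 ≠ p3) (h14 : p1 ≠ p4)
    (h23 : p2 ≠ p3) (h24 : p2 ≠ p4) (h34 : p3 ≠ p4) :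
    ((2*I) * (2*I - 1)) * ((2*I - 2) * (2*I - 3))
      * ((labelings I K Nc).filter
          (fun L => L p1 = a ∧ L p2 = a ∧ L p3 = b ∧ L p4 = b)).card
      = (labelings I K Nc).card * ((Nc a * (Nc a - 1)) * (Nc b * (Nc b - 1))) := by
  classical
  set Ω : Finset ((Fin (2*I) × Fin (2*I)) × (Fin (2*I) × Fin (2*I))) :=
    ((univ : Finset (Fin (2*I))).offDiag ×ˢ (univ : Finset (Fin (2*I))).offDiag).filter
      (fun x => x.1.1 ≠ x.2.1 ∧ x.1.1 ≠ x.2.2 ∧ x.1.2 ≠ x.2.1 ∧ x.1.2 ≠ x.2.2) with hΩ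
  have key : ∑ x ∈ Ω, ((labelings I K Nc).filter
        (fun L => L x.1.1 = a ∧ L x.1.2 = a ∧ L x.2.1 = b ∧ L x.2.2 = b)).card
      = (labelings I K Nc).card * ((Nc a * (Nc a - 1)) * (Nc b * (Nc b - 1))) := by
    have swap : ∀ x : (Fin (2*I) × Fin (2*I)) × (Fin (2*I) × Fin (2*I)),
        ((labelings I K Nc).filter
          (fun L => L x.1.1 = a ∧ L x.1.2 = a ∧ L x.2.1 = b ∧ L x.2.2 = b)).card
        = ∑ L ∈ labelings I K Nc,
            if (L x.1.1 = a ∧ L x.1.2 = a ∧ L x.2.1 = b ∧ L x.2.2 = b) then 1 else 0 := by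
      intro x; rw [Finset.card_filter]
    simp_rw [swap]
    rw [Finset.sum_comm]
    have inner : ∀ L ∈ labelings I K Nc,
        (∑ x ∈ Ω, if (L x.1.1 = a ∧ L x.1.2 = a ∧ L x.2.1 = b ∧ L x.2.2 = b) then 1 else 0)
          = (Nc a * (Nc a - 1)) * (Nc b * (Nc b - 1)) := by
      intro L hL
      rw [← Finset.sum_filter, Finset.sum_const, smul_eq_mul, mul_one]
      have hset : Ω.filter (fun x => L x.1.1 = a ∧ L x.1.2 = a ∧ L x.2.1 = b ∧ L x.2.2 = b)
          = (univ.filter (fun i => L i = a)).offDiag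
              ×ˢ (univ.filter (fun i => L i = b)).offDiag := by
        ext ⟨⟨x1, x2⟩, ⟨y1, y2⟩⟩
        simp only [hΩ, mem_filter, mem_product, Finset.mem_offDiag, mem_univ, true_and]
        constructor
        · intro h; tauto
        · intro h
          have h1 : L x1 = a := by tauto
          have h2 : L x2 = a := by tauto
          have h3 : L y1 = b := by tauto
          have h4 : L y2 = b := by tauto
          have hx : x1 ≠ x2 := by tauto
          have hy : y1 ≠ y2 := by tauto
          have c1 : x1 ≠ y1 := fun e => hab (by rw [← h1, e]; exact h3)
          have c2 : x1 ≠ y2 := fun e => hab (by rw [← h1, e]; exact h4)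
          have c3 : x2 ≠ y1 := fun e => hab (by rw [← h2, e]; exact h3)
          have c4 : x2 ≠ y2 := fun e => hab (by rw [← h2, e]; exact h4)
          tauto
      rw [hset, Finset.card_product, Finset.offDiag_card, Finset.offDiag_card]
      simp only [labelings, mem_filter] at hL
      rw [hL.2 a, hL.2 b, Nat.mul_sub_one, Nat.mul_sub_one]
    rw [Finset.sum_congr rfl inner, Finset.sum_const, smul_eq_mul]
  have const : ∀ x ∈ Ω, ((labelings I K Nc).filter
        (fun L => L x.1.1 = a ∧ L x.1.2 = a ∧ L x.2.1 = b ∧ L x.2.2 = b)).card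
      = ((labelings I K Nc).filter
          (fun L => L p1 = a ∧ L p2 = a ∧ L p3 = b ∧ L p4 = b)).card := by
    rintro ⟨⟨x1, x2⟩, ⟨y1, y2⟩⟩ hx
    simp only [hΩ, mem_filter, mem_product, Finset.mem_offDiag, mem_univ, true_and] at hx
    have hx12 : x1 ≠ x2 := by tauto
    have hy12 : y1 ≠ y2 := by tauto
    have c1 : x1 ≠ y1 := by tauto
    have c2 : x1 ≠ y2 := by tauto
    have c3 : x2 ≠ y1 := by tauto
    have c4 : x2 ≠ y2 := by tauto
    exact transport4 x1 x2 y1 y2 p1 p2 p3 p4 hx12 c1 c2 c3 c4 hy12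
      h12 h13 h14 h23 h24 h34 a b
  rw [Finset.sum_congr rfl const, Finset.sum_const, smul_eq_mul] at key
  have hΩcard : Ω.card = ((2*I) * (2*I - 1)) * ((2*I - 2) * (2*I - 3)) := by
    rw [hΩ, Finset.card_filter, Finset.sum_product]
    have inner2 : ∀ u ∈ (univ : Finset (Fin (2*I))).offDiag,
        (∑ v ∈ (univ : Finset (Fin (2*I))).offDiag,
          if (u.1 ≠ v.1 ∧ u.1 ≠ v.2 ∧ u.2 ≠ v.1 ∧ u.2 ≠ v.2) then 1 else 0)
          = (2*I - 2) * (2*I - 3) := by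
      rintro ⟨u1, u2⟩ hu
      rw [Finset.mem_offDiag] at hu
      rw [← Finset.sum_filter, Finset.sum_const, smul_eq_mul, mul_one]
      have hset2 : (univ : Finset (Fin (2*I))).offDiag.filter
          (fun v => u1 ≠ v.1 ∧ u1 ≠ v.2 ∧ u2 ≠ v.1 ∧ u2 ≠ v.2)
          = ((univ : Finset (Fin (2*I))) \ {u1, u2}).offDiag := by
        ext ⟨v1, v2⟩
        simp only [mem_filter, Finset.mem_offDiag, mem_univ, true_and, mem_sdiff,
          mem_insert, mem_singleton, not_or]
        constructor
        · intro h
          simp only [Finset.mem_sdiff, Finset.mem_univ, true_and, Finset.mem_insert,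
            Finset.mem_singleton, not_or]
          tauto
        · intro h
          simp only [Finset.mem_sdiff, Finset.mem_univ, true_and, Finset.mem_insert,
            Finset.mem_singleton, not_or] at h
          tauto
      have hc : ((univ : Finset (Fin (2*I))) \ {u1, u2}).card = 2*I - 2 := by
        rw [Finset.card_sdiff, Finset.inter_univ, Finset.card_pair hu.2.2]
        simp
      have h3eq : (2*I - 3) = (2*I - 2) - 1 := by rw [Nat.sub_sub]
      rw [hset2, Finset.offDiag_card, hc, h3eq, Nat.mul_sub_one]
    rw [Finset.sum_congr rfl inner2, Finset.sum_const, smul_eq_mul, Finset.offDiag_card,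
      Nat.mul_sub_one]
    simp
  rw [hΩcard] at key
  rw [← key]


lemma pair_count_real (hI : 1 ≤ I) (a b : Fin K) (hab : a ≠ b)
    (p1 p2 : Fin (2*I)) (hp : p1 ≠ p2) :
    ((((labelings I K Nc).filter (fun L => L p1 = a ∧ L p2 = b)).card : ℕ) : ℝ)
      = ((labelings I K Nc).card : ℝ) * ((Nc a : ℝ) * (Nc b : ℝ))
          / ((2*(I:ℝ)) * (2*(I:ℝ) - 1)) := by
  have h := pair_count (Nc := Nc) a b hab p1 p2 hp
  have h1 : (1:ℕ) ≤ 2*I := by linarith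
  have hc := congrArg (Nat.cast (R := ℝ)) h
  push_cast [Nat.cast_sub h1] at hc
  have hIr : (1:ℝ) ≤ (I:ℝ) := by exact_mod_cast hI
  have a0 : (0:ℝ) < 2*(I:ℝ) := by linarith
  have a1 : (0:ℝ) < 2*(I:ℝ) - 1 := by linarith
  have hd : ((2*(I:ℝ)) * (2*(I:ℝ) - 1)) ≠ 0 := ne_of_gt (mul_pos a0 a1)
  field_simp
  linear_combination hc

lemma quad_count_real (hN : 4 ≤ 2*I) (a b : Fin K) (hab : a ≠ b)
    (ha : 1 ≤ Nc a) (hb : 1 ≤ Nc b) (p1 p2 p3 p4 : Fin (2*I))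
    (h12 : p1 ≠ p2) (h13 : p1 ≠ p3) (h14 : p1 ≠ p4)
    (h23 : p2 ≠ p3) (h24 : p2 ≠ p4) (h34 : p3 ≠ p4) :
    ((((labelings I K Nc).filter
        (fun L => L p1 = a ∧ L p2 = a ∧ L p3 = b ∧ L p4 = b)).card : ℕ) : ℝ)
      = ((labelings I K Nc).card : ℝ)
          * (((Nc a : ℝ) * ((Nc a : ℝ) - 1)) * ((Nc b : ℝ) * ((Nc b : ℝ) - 1)))
          / (((2*(I:ℝ)) * (2*(I:ℝ) - 1)) * ((2*(I:ℝ) - 2) * (2*(I:ℝ) - 3))) := by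
  have h := quad_count (Nc := Nc) a b hab p1 p2 p3 p4 h12 h13 h14 h23 h24 h34
  have e1 : (1:ℕ) ≤ 2*I := by linarith
  have e2 : (2:ℕ) ≤ 2*I := by linarith
  have e3 : (3:ℕ) ≤ 2*I := by linarith
  have hc := congrArg (Nat.cast (R := ℝ)) h
  push_cast [Nat.cast_sub e1, Nat.cast_sub e2, Nat.cast_sub e3,
    Nat.cast_sub ha, Nat.cast_sub hb] at hc
  have hIr : (4:ℝ) ≤ 2*(I:ℝ) := by exact_mod_cast hN
  have a0 : (0:ℝ) < 2*(I:ℝ) := by linarith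
  have a1 : (0:ℝ) < 2*(I:ℝ) - 1 := by linarith
  have a2 : (0:ℝ) < 2*(I:ℝ) - 2 := by linarith
  have a3 : (0:ℝ) < 2*(I:ℝ) - 3 := by linarith
  have hd : (((2*(I:ℝ)) * (2*(I:ℝ) - 1)) * ((2*(I:ℝ) - 2) * (2*(I:ℝ) - 3))) ≠ 0 :=
    ne_of_gt (mul_pos (mul_pos a0 a1) (mul_pos a2 a3))
  rw [eq_div_iff hd]
  linear_combination hc

lemma variance_eq (hM : (labelings I K Nc).card ≠ 0) (X : (Fin (2 * I) → Fin K) → ℝ) :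
    variance I K Nc X
      = (∑ L ∈ labelings I K Nc, X L ^ 2) / ((labelings I K Nc).card : ℝ)
        - ((∑ L ∈ labelings I K Nc, X L) / ((labelings I K Nc).card : ℝ)) ^ 2 := by
  unfold variance expct
  have hM' : ((labelings I K Nc).card : ℝ) ≠ 0 := Nat.cast_ne_zero.mpr hM
  set A := labelings I K Nc
  set M : ℝ := (A.card : ℝ)
  set μ : ℝ := (∑ L ∈ A, X L) / M with hμ
  have expand : ∑ L ∈ A, (X L - μ)^2
      = (∑ L ∈ A, X L^2) - 2*μ*(∑ L ∈ A, X L) + (A.card : ℝ) * μ^2 := by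
    have h1 : ∀ L, (X L - μ)^2 = X L^2 - 2*μ*(X L) + μ^2 := fun L => by ring
    simp_rw [h1]
    rw [Finset.sum_add_distrib, Finset.sum_sub_distrib, ← Finset.mul_sum, Finset.sum_const,
      nsmul_eq_mul]
  rw [expand, hμ]
  field_simp
  ring

lemma ep_ne_1 {I : ℕ} (j k : Fin I) (h : j ≠ k) : ep1 j ≠ ep1 k := by
  have : j.val ≠ k.val := fun e => h (Fin.ext e)
  simp only [ep1, ne_eq, Fin.mk.injEq]
  omega

lemma ep_ne_2 {I : ℕ} (j k : Fin I) : ep1 j ≠ ep2 k := by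
  simp only [ep1, ep2, ne_eq, Fin.mk.injEq]
  omega

lemma ep_ne_3 {I : ℕ} (j k : Fin I) (h : j ≠ k) : ep2 j ≠ ep2 k := by
  have : j.val ≠ k.val := fun e => h (Fin.ext e)
  simp only [ep2, ne_eq, Fin.mk.injEq]
  omega

/-- The indicator that pair `j` is an `{s₁,s₂}` cross-match. -/
def ind {I K : ℕ} (s₁ s₂ : Fin K) (j : Fin I) (L : Fin (2*I) → Fin K) : ℝ :=
  if (L (ep1 j) = s₁ ∧ L (ep2 j) = s₂) ∨ (L (ep1 j) = s₂ ∧ L (ep2 j) = s₁) then 1 else 0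

lemma crossCount_cast (s₁ s₂ : Fin K) (hs : s₁ ≠ s₂) (L : Fin (2*I) → Fin K) :
    ((crossCount I K L s₁ s₂ : ℕ) : ℝ) = ∑ j : Fin I, ind s₁ s₂ j L := by
  rw [crossCount]
  rw [Finset.filter_congr (fun j _ => pair_eq_pair' hs)]
  rw [Finset.card_filter]
  unfold ind
  push_cast
  rfl

lemma sum_ind (hI : 1 ≤ I) (s₁ s₂ : Fin K) (hs : s₁ ≠ s₂) (j : Fin I) :
    ∑ L ∈ labelings I K Nc, ind s₁ s₂ j L
      = 2 * (((labelings I K Nc).card : ℝ) * ((Nc s₁ : ℝ) * (Nc s₂ : ℝ))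
          / ((2*(I:ℝ)) * (2*(I:ℝ) - 1))) := by
  unfold ind
  rw [Finset.sum_boole]
  rw [Finset.filter_or, Finset.card_union_of_disjoint
    (Finset.disjoint_filter.mpr (fun L _ h1 h2 => hs (h1.1.symm.trans h2.1)))]
  push_cast
  rw [pair_count_real hI s₁ s₂ hs _ _ (ep_ne_2 j j),
    pair_count_real hI s₂ s₁ (Ne.symm hs) _ _ (ep_ne_2 j j)]
  ring

lemma sum_ind_mul (hN : 4 ≤ 2*I) (s₁ s₂ : Fin K) (hs : s₁ ≠ s₂)
    (h1 : 1 ≤ Nc s₁) (h2 : 1 ≤ Nc s₂) (j k : Fin I) (hjk : j ≠ k) :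
    ∑ L ∈ labelings I K Nc, ind s₁ s₂ j L * ind s₁ s₂ k L
      = 4 * (((labelings I K Nc).card : ℝ)
          * (((Nc s₁ : ℝ) * ((Nc s₁ : ℝ) - 1)) * ((Nc s₂ : ℝ) * ((Nc s₂ : ℝ) - 1)))
          / (((2*(I:ℝ)) * (2*(I:ℝ) - 1)) * ((2*(I:ℝ) - 2) * (2*(I:ℝ) - 3)))) := by
  have hprod : ∀ L : Fin (2*I) → Fin K, ind s₁ s₂ j L * ind s₁ s₂ k L
      = if (((L (ep1 j) = s₁ ∧ L (ep2 j) = s₂) ∨ (L (ep1 j) = s₂ ∧ L (ep2 j) = s₁))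
          ∧ ((L (ep1 k) = s₁ ∧ L (ep2 k) = s₂) ∨ (L (ep1 k) = s₂ ∧ L (ep2 k) = s₁)))
        then (1:ℝ) else 0 := by
    intro L
    unfold ind
    rw [ite_zero_mul_ite_zero, one_mul]
  simp_rw [hprod]
  rw [Finset.sum_boole]
  have hiff : ∀ L : Fin (2*I) → Fin K,
      (((L (ep1 j) = s₁ ∧ L (ep2 j) = s₂) ∨ (L (ep1 j) = s₂ ∧ L (ep2 j) = s₁))
        ∧ ((L (ep1 k) = s₁ ∧ L (ep2 k) = s₂) ∨ (L (ep1 k) = s₂ ∧ L (ep2 k) = s₁)))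
      ↔ ((L (ep1 j) = s₁ ∧ L (ep1 k) = s₁ ∧ L (ep2 j) = s₂ ∧ L (ep2 k) = s₂)
          ∨ ((L (ep1 j) = s₁ ∧ L (ep2 k) = s₁ ∧ L (ep2 j) = s₂ ∧ L (ep1 k) = s₂)
          ∨ ((L (ep2 j) = s₁ ∧ L (ep1 k) = s₁ ∧ L (ep1 j) = s₂ ∧ L (ep2 k) = s₂)
          ∨ (L (ep2 j) = s₁ ∧ L (ep2 k) = s₁ ∧ L (ep1 j) = s₂ ∧ L (ep1 k) = s₂)))) := by
    intro L; tauto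
  rw [Finset.filter_congr (fun L _ => hiff L)]
  rw [Finset.filter_or, Finset.filter_or, Finset.filter_or]
  have d12 : ∀ {p q : (Fin (2*I) → Fin K) → Prop} {a b : Fin (2*I)}
      [DecidablePred p] [DecidablePred q],
      (∀ L, p L → L a = s₁) → (∀ L, q L → L a = s₂) →
      Disjoint ((labelings I K Nc).filter p) ((labelings I K Nc).filter q) := by
    intro p q a b _ _ hp hq
    exact Finset.disjoint_filter.mpr (fun L _ x1 x2 => hs ((hp L x1).symm.trans (hq L x2)))
  rw [Finset.card_union_of_disjoint, Finset.card_union_of_disjoint,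
    Finset.card_union_of_disjoint]
  rotate_left
  · -- disjoint Q3 Q4 : conflict at ep1 k (s₁ vs s₂)
    exact d12 (a := ep1 k) (b := ep1 k) (fun L h => h.2.1) (fun L h => h.2.2.2)
  · -- disjoint Q2 (Q3 ∪ Q4) : conflict at ep1 j
    refine Finset.disjoint_union_right.mpr ⟨?_, ?_⟩
    · exact d12 (a := ep1 j) (b := ep1 j) (fun L h => h.1) (fun L h => h.2.2.1)
    · exact d12 (a := ep1 j) (b := ep1 j) (fun L h => h.1) (fun L h => h.2.2.1)
  · -- disjoint Q1 (Q2 ∪ Q3 ∪ Q4)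
    refine Finset.disjoint_union_right.mpr ⟨?_, Finset.disjoint_union_right.mpr ⟨?_, ?_⟩⟩
    · exact d12 (a := ep1 k) (b := ep1 k) (fun L h => h.2.1) (fun L h => h.2.2.2)
    · exact d12 (a := ep1 j) (b := ep1 j) (fun L h => h.1) (fun L h => h.2.2.1)
    · exact d12 (a := ep1 j) (b := ep1 j) (fun L h => h.1) (fun L h => h.2.2.1)
  push_cast
  have hv : j.val ≠ k.val := fun e => hjk (Fin.ext e)
  rw [quad_count_real hN s₁ s₂ hs h1 h2 (ep1 j) (ep1 k) (ep2 j) (ep2 k)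
      (by simp only [ep1, ep2, ne_eq, Fin.mk.injEq]; omega)
      (by simp only [ep1, ep2, ne_eq, Fin.mk.injEq]; omega)
      (by simp only [ep1, ep2, ne_eq, Fin.mk.injEq]; omega)
      (by simp only [ep1, ep2, ne_eq, Fin.mk.injEq]; omega)
      (by simp only [ep1, ep2, ne_eq, Fin.mk.injEq]; omega)
      (by simp only [ep1, ep2, ne_eq, Fin.mk.injEq]; omega),
    quad_count_real hN s₁ s₂ hs h1 h2 (ep1 j) (ep2 k) (ep2 j) (ep1 k)
      (by simp only [ep1, ep2, ne_eq, Fin.mk.injEq]; omega)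
      (by simp only [ep1, ep2, ne_eq, Fin.mk.injEq]; omega)
      (by simp only [ep1, ep2, ne_eq, Fin.mk.injEq]; omega)
      (by simp only [ep1, ep2, ne_eq, Fin.mk.injEq]; omega)
      (by simp only [ep1, ep2, ne_eq, Fin.mk.injEq]; omega)
      (by simp only [ep1, ep2, ne_eq, Fin.mk.injEq]; omega),
    quad_count_real hN s₁ s₂ hs h1 h2 (ep2 j) (ep1 k) (ep1 j) (ep2 k)
      (by simp only [ep1, ep2, ne_eq, Fin.mk.injEq]; omega)
      (by simp only [ep1, ep2, ne_eq, Fin.mk.injEq]; omega)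
      (by simp only [ep1, ep2, ne_eq, Fin.mk.injEq]; omega)
      (by simp only [ep1, ep2, ne_eq, Fin.mk.injEq]; omega)
      (by simp only [ep1, ep2, ne_eq, Fin.mk.injEq]; omega)
      (by simp only [ep1, ep2, ne_eq, Fin.mk.injEq]; omega),
    quad_count_real hN s₁ s₂ hs h1 h2 (ep2 j) (ep2 k) (ep1 j) (ep1 k)
      (by simp only [ep1, ep2, ne_eq, Fin.mk.injEq]; omega)
      (by simp only [ep1, ep2, ne_eq, Fin.mk.injEq]; omega)
      (by simp only [ep1, ep2, ne_eq, Fin.mk.injEq]; omega)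
      (by simp only [ep1, ep2, ne_eq, Fin.mk.injEq]; omega)
      (by simp only [ep1, ep2, ne_eq, Fin.mk.injEq]; omega)
      (by simp only [ep1, ep2, ne_eq, Fin.mk.injEq]; omega)]
  ring

lemma sum_cc (hI : 1 ≤ I) (s₁ s₂ : Fin K) (hs : s₁ ≠ s₂) :
    ∑ L ∈ labelings I K Nc, ((crossCount I K L s₁ s₂ : ℕ) : ℝ)
      = (I:ℝ) * (2 * (((labelings I K Nc).card : ℝ) * ((Nc s₁ : ℝ) * (Nc s₂ : ℝ))
          / ((2*(I:ℝ)) * (2*(I:ℝ) - 1)))) := by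
  simp_rw [crossCount_cast s₁ s₂ hs]
  rw [Finset.sum_comm]
  rw [Finset.sum_congr rfl (fun j _ => sum_ind hI s₁ s₂ hs j), Finset.sum_const,
    Finset.card_univ, Fintype.card_fin, nsmul_eq_mul]

lemma sum_cc_sq (hI : 1 ≤ I) (hN : 4 ≤ 2*I) (s₁ s₂ : Fin K) (hs : s₁ ≠ s₂)
    (h1 : 1 ≤ Nc s₁) (h2 : 1 ≤ Nc s₂) :
    ∑ L ∈ labelings I K Nc, ((crossCount I K L s₁ s₂ : ℕ) : ℝ)^2
      = (I:ℝ) * (2 * (((labelings I K Nc).card : ℝ) * ((Nc s₁ : ℝ) * (Nc s₂ : ℝ))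
          / ((2*(I:ℝ)) * (2*(I:ℝ) - 1))))
        + ((I:ℝ)^2 - (I:ℝ))
            * (4 * (((labelings I K Nc).card : ℝ)
          * (((Nc s₁ : ℝ) * ((Nc s₁ : ℝ) - 1)) * ((Nc s₂ : ℝ) * ((Nc s₂ : ℝ) - 1)))
          / (((2*(I:ℝ)) * (2*(I:ℝ) - 1)) * ((2*(I:ℝ) - 2) * (2*(I:ℝ) - 3))))) := by
  have step1 : ∀ L : Fin (2*I) → Fin K, ((crossCount I K L s₁ s₂ : ℕ) : ℝ)^2
      = ∑ x ∈ ((univ : Finset (Fin I)) ×ˢ (univ : Finset (Fin I))),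
          ind s₁ s₂ x.1 L * ind s₁ s₂ x.2 L := by
    intro L
    rw [sq, crossCount_cast s₁ s₂ hs L, Finset.sum_mul_sum, ← Finset.sum_product']
  simp_rw [step1]
  rw [Finset.sum_comm]
  rw [← Finset.diag_union_offDiag, Finset.sum_union (Finset.disjoint_diag_offDiag _)]
  have hdiag : ∑ x ∈ (univ : Finset (Fin I)).diag,
      ∑ L ∈ labelings I K Nc, ind s₁ s₂ x.1 L * ind s₁ s₂ x.2 L
      = (I:ℝ) * (2 * (((labelings I K Nc).card : ℝ) * ((Nc s₁ : ℝ) * (Nc s₂ : ℝ))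
          / ((2*(I:ℝ)) * (2*(I:ℝ) - 1)))) := by
    rw [Finset.sum_diag]
    have hsq : ∀ (j : Fin I) (L : Fin (2*I) → Fin K),
        ind s₁ s₂ j L * ind s₁ s₂ j L = ind s₁ s₂ j L := by
      intro j L; unfold ind; split_ifs <;> ring
    simp_rw [hsq]
    rw [Finset.sum_congr rfl (fun j _ => sum_ind hI s₁ s₂ hs j), Finset.sum_const,
      Finset.card_univ, Fintype.card_fin, nsmul_eq_mul]
  have hoff : ∑ x ∈ (univ : Finset (Fin I)).offDiag,
      ∑ L ∈ labelings I K Nc, ind s₁ s₂ x.1 L * ind s₁ s₂ x.2 L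
      = ((I:ℝ)^2 - (I:ℝ))
            * (4 * (((labelings I K Nc).card : ℝ)
          * (((Nc s₁ : ℝ) * ((Nc s₁ : ℝ) - 1)) * ((Nc s₂ : ℝ) * ((Nc s₂ : ℝ) - 1)))
          / (((2*(I:ℝ)) * (2*(I:ℝ) - 1)) * ((2*(I:ℝ) - 2) * (2*(I:ℝ) - 3))))) := by
    have hterm : ∀ x ∈ (univ : Finset (Fin I)).offDiag,
        (∑ L ∈ labelings I K Nc, ind s₁ s₂ x.1 L * ind s₁ s₂ x.2 L)
        = 4 * (((labelings I K Nc).card : ℝ)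
          * (((Nc s₁ : ℝ) * ((Nc s₁ : ℝ) - 1)) * ((Nc s₂ : ℝ) * ((Nc s₂ : ℝ) - 1)))
          / (((2*(I:ℝ)) * (2*(I:ℝ) - 1)) * ((2*(I:ℝ) - 2) * (2*(I:ℝ) - 3)))) := by
      rintro ⟨j, k⟩ hx
      rw [Finset.mem_offDiag] at hx
      exact sum_ind_mul hN s₁ s₂ hs h1 h2 j k hx.2.2
    rw [Finset.sum_congr rfl hterm, Finset.sum_const, nsmul_eq_mul, Finset.offDiag_card,
      Finset.card_univ, Fintype.card_fin]
    have hcast : ((I*I - I : ℕ) : ℝ) = (I:ℝ)^2 - (I:ℝ) := by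
      have hle : I ≤ I*I := Nat.le_mul_of_pos_left I (by omega)
      push_cast [Nat.cast_sub hle]
      ring
    rw [hcast]
  rw [hdiag, hoff]

/-- null variance of a cross-count, for `N ≥ 4` and `s₁ ≠ s₂`. -/
theorem stmt3 (K I : ℕ) (hK : 2 ≤ K) (hI : 1 ≤ I) (hN : 4 ≤ 2 * I)
    (Nc : Fin K → ℕ) (hNpos : ∀ s, 0 < Nc s) (hNsum : ∑ s, Nc s = 2 * I)
    (s₁ s₂ : Fin K) (hs : s₁ ≠ s₂) :
    variance I K Nc (fun L => (crossCount I K L s₁ s₂ : ℝ))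
      = (Nc s₁ : ℝ) * (Nc s₂ : ℝ) * ((Nc s₁ : ℝ) - 1) * ((Nc s₂ : ℝ) - 1)
          / (((2 * I : ℝ) - 1) * ((2 * I : ℝ) - 3))
        + ((Nc s₁ : ℝ) * (Nc s₂ : ℝ) / ((2 * I : ℝ) - 1))
            * (1 - (Nc s₁ : ℝ) * (Nc s₂ : ℝ) / ((2 * I : ℝ) - 1)) := by
  have hMne : ((labelings I K Nc).card : ℕ) ≠ 0 :=
    (Finset.card_pos.mpr (labelings_nonempty I K Nc hNsum)).ne'
  have hMr : ((labelings I K Nc).card : ℝ) ≠ 0 := Nat.cast_ne_zero.mpr hMne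
  rw [variance_eq hMne]
  rw [sum_cc hI s₁ s₂ hs, sum_cc_sq hI hN s₁ s₂ hs (hNpos s₁) (hNpos s₂)]
  have hIr : (4:ℝ) ≤ 2*(I:ℝ) := by exact_mod_cast hN
  have a0 : (0:ℝ) < 2*(I:ℝ) := by linarith
  have a1 : (0:ℝ) < 2*(I:ℝ) - 1 := by linarith
  have a2 : (0:ℝ) < 2*(I:ℝ) - 2 := by linarith
  have a3 : (0:ℝ) < 2*(I:ℝ) - 3 := by linarith
  have b0 : (2*(I:ℝ)) ≠ 0 := ne_of_gt a0
  have b1 : (2*(I:ℝ) - 1) ≠ 0 := ne_of_gt a1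
  have b2 : (2*(I:ℝ) - 2) ≠ 0 := ne_of_gt a2
  have b3 : (2*(I:ℝ) - 3) ≠ 0 := ne_of_gt a3
  have b4 : (I:ℝ) ≠ 0 := by linarith
  have b5 : (I:ℝ) - 1 ≠ 0 := by linarith
  have b6 : (I:ℝ) * 2 - 1 ≠ 0 := by linarith
  have b7 : (I:ℝ) * 2 - 3 ≠ 0 := by linarith
  push_cast
  field_simp
  ring

end Crossmatch
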